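/- Let Ω be a graded associative algebra over R[[ε]] of the form Ω₀[[ε]] with Ω₀ graded over R, and D = D₀ + εD₁ + ε²D₂ + … a degree-1 superderivation with D²a = [F,a]⋆, DF = 0, where F ∈ εΩ² (i.e. F ≡ 0 mod ε). Suppose the cohomology of D₀ on Ω₀ vanishes in degree 2 (every D₀-closed 2-form is D₀-exact). Then there exists γ ∈ εΩ¹ with F + Dγ + γ⋆γ = 0; i.e. D + [γ,·]⋆ is flat. -/

import Mathlib

open PowerSeries Finset

/-- An operator `D = D₀ + εD₁ + ε²D₂ + …` on `Ω = Ω₀[[ε]]`, given by the family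
of its coefficients `Dseq j = Dⱼ`. -/
noncomputable def seriesOp {Ω₀ : Type*} [Ring Ω₀] (Dseq : ℕ → (Ω₀ →+ Ω₀)) :
    PowerSeries Ω₀ → PowerSeries Ω₀ :=
  fun f => PowerSeries.mk fun n => ∑ i ∈ range (n + 1), Dseq i (coeff (n - i) f)

section FedosovAux

variable {Ω₀ : Type*} [Ring Ω₀]

lemma coeff_seriesOp (Dseq : ℕ → (Ω₀ →+ Ω₀)) (f : PowerSeries Ω₀) (n : ℕ) :
    coeff n (seriesOp Dseq f) = ∑ i ∈ range (n + 1), Dseq i (coeff (n - i) f) := by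
  simp [seriesOp]

lemma seriesOp_add (Dseq : ℕ → (Ω₀ →+ Ω₀)) (f g : PowerSeries Ω₀) :
    seriesOp Dseq (f + g) = seriesOp Dseq f + seriesOp Dseq g := by
  ext n
  simp [coeff_seriesOp, Finset.sum_add_distrib]

variable (Gr : ℕ → AddSubgroup Ω₀) (Dseq : ℕ → (Ω₀ →+ Ω₀))
  (hH2 : ∀ x : Ω₀, x ∈ Gr 2 → Dseq 0 x = 0 → ∃ y ∈ Gr 1, Dseq 0 y = x)
  (F : PowerSeries Ω₀)

open Classical in
noncomputable def pickEl (x : Ω₀) : Ω₀ :=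
  if h : x ∈ Gr 2 ∧ Dseq 0 x = 0 then (hH2 x h.1 h.2).choose else 0

lemma pickEl_mem (x : Ω₀) : pickEl Gr Dseq hH2 x ∈ Gr 1 := by
  unfold pickEl
  split
  · rename_i h
    exact (hH2 x h.1 h.2).choose_spec.1
  · exact zero_mem _

lemma pickEl_spec {x : Ω₀} (hx : x ∈ Gr 2) (h0 : Dseq 0 x = 0) :
    Dseq 0 (pickEl Gr Dseq hH2 x) = x := by
  unfold pickEl
  rw [dif_pos ⟨hx, h0⟩]
  exact (hH2 x hx h0).choose_spec.2

/-- The residue at order `m` built from the lower coefficients of `γ`. -/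
noncomputable def resid (g : ℕ → Ω₀) (m : ℕ) : Ω₀ :=
  coeff m F + ∑ i ∈ range m, Dseq (i + 1) (g (m - 1 - i))
    + ∑ i ∈ range (m - 1), g (i + 1) * g (m - 1 - i)

lemma resid_congr {g g' : ℕ → Ω₀} (m : ℕ) (h : ∀ j < m, g j = g' j) :
    resid Dseq F g m = resid Dseq F g' m := by
  unfold resid
  congr 1
  · congr 1
    refine Finset.sum_congr rfl fun i hi => ?_
    simp only [mem_range] at hi
    rw [h (m - 1 - i) (by omega)]
  · refine Finset.sum_congr rfl fun i hi => ?_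
    simp only [mem_range] at hi
    rw [h (i + 1) (by omega), h (m - 1 - i) (by omega)]

noncomputable def Gaux : ℕ → ℕ → Ω₀
  | 0 => fun _ => 0
  | n + 1 => Function.update (Gaux n) (n + 1)
      (pickEl Gr Dseq hH2 (-(resid Dseq F (Gaux n) (n + 1))))

noncomputable def gam (n : ℕ) : Ω₀ := Gaux Gr Dseq hH2 F n n

lemma Gaux_stable : ∀ n k, k ≤ n → Gaux Gr Dseq hH2 F n k = gam Gr Dseq hH2 F k := by
  intro n
  induction n with
  | zero =>
    intro k hk
    have hk0 : k = 0 := Nat.le_zero.mp hk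
    subst hk0
    rfl
  | succ n ih =>
    intro k hk
    rcases Nat.eq_or_lt_of_le hk with h | h
    · subst h; rfl
    · have hk' : k ≤ n := by omega
      simp only [Gaux]
      rw [Function.update_of_ne (by omega)]
      exact ih k hk'

lemma gam_zero : gam Gr Dseq hH2 F 0 = 0 := rfl

lemma gam_succ (n : ℕ) :
    gam Gr Dseq hH2 F (n + 1)
      = pickEl Gr Dseq hH2 (-(resid Dseq F (gam Gr Dseq hH2 F) (n + 1))) := by
  have hres : resid Dseq F (Gaux Gr Dseq hH2 F n) (n + 1)
      = resid Dseq F (gam Gr Dseq hH2 F) (n + 1) :=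
    resid_congr Dseq F (n + 1) fun j hj => Gaux_stable Gr Dseq hH2 F n j (by omega)
  show Gaux Gr Dseq hH2 F (n + 1) (n + 1) = _
  simp only [Gaux]
  rw [Function.update_self, hres]

lemma gam_mem (n : ℕ) : gam Gr Dseq hH2 F n ∈ Gr 1 := by
  cases n with
  | zero => rw [gam_zero]; exact zero_mem _
  | succ n => rw [gam_succ]; exact pickEl_mem Gr Dseq hH2 _

end FedosovAux

/-- Lemma 4.5 of Cattaneo–Felder–Tomassini, abstractly: `Ω₀` a graded associative
algebra (with grading `Gr` by form degree), `Ω = Ω₀[[ε]]`, and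
`D = D₀ + εD₁ + …` a Fedosov connection: a degree-1 superderivation with
curvature `D²=[F,·]⋆` and `DF = 0`, whose Weyl curvature `F` lies in `εΩ²`.
If every `D₀`-closed 2-form is `D₀`-exact, then there is `γ ∈ εΩ¹` with
`F + Dγ + γ⋆γ = 0`, i.e. `D + [γ,·]⋆` is flat. -/
theorem fedosov_flattening
    {Ω₀ : Type*} [Ring Ω₀] (Gr : ℕ → AddSubgroup Ω₀)
    (hmul : ∀ (p q : ℕ) (x y : Ω₀), x ∈ Gr p → y ∈ Gr q → x * y ∈ Gr (p + q))
    (Dseq : ℕ → (Ω₀ →+ Ω₀))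
    (hDdeg : ∀ (i p : ℕ) (x : Ω₀), x ∈ Gr p → Dseq i x ∈ Gr (p + 1))
    (hLeib : ∀ (p : ℕ) (x y : PowerSeries Ω₀), (∀ n, coeff n x ∈ Gr p) →
      seriesOp Dseq (x * y)
        = seriesOp Dseq x * y + ((-1 : ℤ) ^ p) • (x * seriesOp Dseq y))
    (F : PowerSeries Ω₀)
    (hF2 : ∀ n, coeff n F ∈ Gr 2)
    (hF0 : coeff 0 F = 0)
    (hcurv : ∀ x : PowerSeries Ω₀,
      seriesOp Dseq (seriesOp Dseq x) = F * x - x * F)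
    (hBianchi : seriesOp Dseq F = 0)
    (hH2 : ∀ x : Ω₀, x ∈ Gr 2 → Dseq 0 x = 0 → ∃ y ∈ Gr 1, Dseq 0 y = x) :
    ∃ γ : PowerSeries Ω₀, coeff 0 γ = 0 ∧ (∀ n, coeff n γ ∈ Gr 1) ∧
      F + seriesOp Dseq γ + γ * γ = 0 := by
  classical
  set g : ℕ → Ω₀ := gam Gr Dseq hH2 F with hgdef
  have hg0 : g 0 = 0 := gam_zero Gr Dseq hH2 F
  have hgmem : ∀ n, g n ∈ Gr 1 := gam_mem Gr Dseq hH2 F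
  set γ : PowerSeries Ω₀ := PowerSeries.mk g with hγdef
  have hγcoeff : ∀ n, coeff n γ = g n := fun n => coeff_mk n g
  set Fb : PowerSeries Ω₀ := F + seriesOp Dseq γ + γ * γ with hFbdef
  -- coefficientwise description of Fb
  have coeff_Fb : ∀ m, coeff m Fb = Dseq 0 (g m) + resid Dseq F g m := by
    intro m
    have hsub : ∀ i : ℕ, m - (i + 1) = m - 1 - i := fun i => by omega
    rw [hFbdef, map_add, map_add, coeff_seriesOp, coeff_mul,
      Finset.Nat.sum_antidiagonal_eq_sum_range_succ_mk]
    simp only [hγcoeff]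
    have h1 : ∑ i ∈ range (m + 1), Dseq i (g (m - i))
        = (∑ i ∈ range m, Dseq (i + 1) (g (m - 1 - i))) + Dseq 0 (g m) := by
      rw [Finset.sum_range_succ', Nat.sub_zero]
      refine congrArg₂ (· + ·) (Finset.sum_congr rfl fun i _ => ?_) rfl
      rw [hsub i]
    have h2 : ∑ i ∈ range (m + 1), g i * g (m - i)
        = ∑ i ∈ range (m - 1), g (i + 1) * g (m - 1 - i) := by
      cases m with
      | zero =>
        simp only [Finset.sum_range_one, Nat.sub_self, hg0, zero_mul,
          Nat.zero_sub, Finset.range_zero, Finset.sum_empty, mul_zero,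
          Finset.sum_const_zero]
      | succ n =>
        rw [Finset.sum_range_succ', hg0, zero_mul, add_zero]
        have : ∀ i : ℕ, n + 1 - (i + 1) = n - i := fun i => by omega
        simp only [this]
        rw [Finset.sum_range_succ, Nat.sub_self, hg0, mul_zero, add_zero]
        refine Finset.sum_congr rfl fun i hi => ?_
        congr 1
    rw [h1, h2]
    unfold resid
    abel
  have hres2 : ∀ m, resid Dseq F g m ∈ Gr 2 := by
    intro m
    refine add_mem (add_mem (hF2 m) ?_) ?_
    · refine sum_mem fun i hi => ?_
      exact hDdeg (i + 1) 1 _ (hgmem _)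
    · refine sum_mem fun i hi => ?_
      exact hmul 1 1 _ _ (hgmem _) (hgmem _)
  -- D₀ ∘ D₀ = 0
  have hcz : ∀ f : PowerSeries Ω₀, coeff 0 (seriesOp Dseq f)
      = Dseq 0 (coeff 0 f) := by
    intro f
    rw [coeff_seriesOp]
    simp
  have hD0sq : ∀ x : Ω₀, Dseq 0 (Dseq 0 x) = 0 := by
    intro x
    have h := congrArg (coeff 0) (hcurv (PowerSeries.C x))
    rw [hcz, hcz, map_sub] at h
    have hz1 : (coeff 0) (F * PowerSeries.C x) = 0 := by
      rw [coeff_mul]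
      simp [hF0]
    have hz2 : (coeff 0) (PowerSeries.C x * F) = 0 := by
      rw [coeff_mul]
      simp [hF0]
    rw [hz1, hz2, sub_zero, coeff_zero_C] at h
    exact h
  -- Bianchi identity for Fb
  have hγ1 : ∀ n, coeff n γ ∈ Gr 1 := fun n => by rw [hγcoeff]; exact hgmem n
  have hDFb : seriesOp Dseq Fb = Fb * γ - γ * Fb := by
    rw [hFbdef, seriesOp_add, seriesOp_add, hBianchi, hcurv, hLeib 1 γ γ hγ1,
      pow_one, neg_one_zsmul]
    noncomm_ring
  -- main induction: all coefficients of Fb vanish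
  have hFbzero : ∀ m, coeff m Fb = 0 := by
    intro m
    induction m using Nat.strong_induction_on with
    | _ m ih =>
      match m with
      | 0 =>
        rw [coeff_Fb, hg0, map_zero, zero_add]
        unfold resid
        simp only [hF0, Finset.range_zero, Finset.sum_empty, Nat.zero_sub,
          add_zero, zero_add]
      | (n + 1) =>
        have key : Dseq 0 (coeff (n + 1) Fb) = 0 := by
          have h := congrArg (coeff (n + 1)) hDFb
          rw [coeff_seriesOp, Finset.sum_range_succ'] at h
          have hz : ∀ i ∈ range (n + 1),
              Dseq (i + 1) (coeff (n + 1 - (i + 1)) Fb) = 0 := by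
            intro i hi
            rw [ih (n + 1 - (i + 1)) (by omega), map_zero]
          rw [Finset.sum_eq_zero hz, zero_add, Nat.sub_zero] at h
          have hr : coeff (n + 1) (Fb * γ - γ * Fb) = 0 := by
            rw [map_sub, coeff_mul, coeff_mul]
            have hA : ∑ p ∈ antidiagonal (n + 1),
                coeff p.1 Fb * coeff p.2 γ = 0 := by
              refine Finset.sum_eq_zero fun p hp => ?_
              rw [Finset.HasAntidiagonal.mem_antidiagonal] at hp
              rcases Nat.eq_zero_or_pos p.2 with h2 | h2
              · rw [h2, hγcoeff, hg0, mul_zero]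
              · rw [ih p.1 (by omega), zero_mul]
            have hB : ∑ p ∈ antidiagonal (n + 1),
                coeff p.1 γ * coeff p.2 Fb = 0 := by
              refine Finset.sum_eq_zero fun p hp => ?_
              rw [Finset.HasAntidiagonal.mem_antidiagonal] at hp
              rcases Nat.eq_zero_or_pos p.1 with h1 | h1
              · rw [h1, hγcoeff, hg0, zero_mul]
              · rw [ih p.2 (by omega), mul_zero]
            rw [hA, hB, sub_zero]
          rw [hr] at h
          exact h
        rw [coeff_Fb] at key ⊢
        rw [map_add, hD0sq, zero_add] at key
        have hspec : Dseq 0 (pickEl Gr Dseq hH2 (-(resid Dseq F g (n + 1))))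
            = -(resid Dseq F g (n + 1)) :=
          pickEl_spec Gr Dseq hH2 (neg_mem (hres2 (n + 1)))
            (by rw [map_neg, key, neg_zero])
        rw [show g (n + 1) = pickEl Gr Dseq hH2 (-(resid Dseq F g (n + 1))) from
          gam_succ Gr Dseq hH2 F n, hspec]
        exact neg_add_cancel _
  refine ⟨γ, ?_, ?_, ?_⟩
  · rw [hγcoeff]; exact hg0
  · exact hγ1
  · show Fb = 0
    ext n
    rw [hFbzero n, map_zero]
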